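/- arXiv:2510.21222 — 4 statements merged into one kernel-verified Lean document; each statement's English description precedes it below -/
import Mathlib

section
/- For every natural number k, the constant term of the Laurent polynomial ((x+y+1)^3/(xyz) + z)^(2k) in ℚ[x^{±1}, y^{±1}, z^{±1}] equals (2k)!·(3k)!/(k!)^5. -/
/-- The ring of Laurent polynomials in three variables over `ℚ`. -/
noncomputable abbrev Laurent3 : Type := AddMonoidAlgebra ℚ (Fin 3 → ℤ)

/-- The Laurent monomial `x_i`. -/
noncomputable def LX (i : Fin 3) : Laurent3 := AddMonoidAlgebra.single (Pi.single i 1) 1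

/-- The Laurent monomial `x_i⁻¹`. -/
noncomputable def LXinv (i : Fin 3) : Laurent3 := AddMonoidAlgebra.single (Pi.single i (-1)) 1

/-- The standard toric Landau–Ginzburg model `(x+y+1)^3/(xyz) + z` of the cubic threefold. -/
noncomputable def cubicLG : Laurent3 :=
  (LX 0 + LX 1 + 1) ^ 3 * LXinv 0 * LXinv 1 * LXinv 2 + LX 2

open Finset AddMonoidAlgebra

noncomputable def Sm (m : Fin 3 → ℤ) : Laurent3 := AddMonoidAlgebra.single m 1

lemma Sm_mul (a b : Fin 3 → ℤ) : Sm a * Sm b = Sm (a + b) := by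
  simp [Sm, AddMonoidAlgebra.single_mul_single]

lemma Sm_pow (n : ℕ) (a : Fin 3 → ℤ) : Sm a ^ n = Sm (n • a) := by
  induction n with
  | zero => simp [Sm, AddMonoidAlgebra.one_def]
  | succ n ih => rw [pow_succ, ih, Sm_mul, succ_nsmul]

lemma binom (a b : Fin 3 → ℤ) (n : ℕ) :
    (Sm a + Sm b) ^ n =
      ∑ t ∈ range (n + 1),
        AddMonoidAlgebra.single (t • a + (n - t) • b) ((n.choose t : ℕ) : ℚ) := by
  rw [add_pow]
  refine Finset.sum_congr rfl fun t ht => ?_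
  rw [Sm_pow, Sm_pow, Sm_mul, AddMonoidAlgebra.natCast_def, Sm,
    AddMonoidAlgebra.single_mul_single]
  simp

lemma trinom (a b : Fin 3 → ℤ) (n : ℕ) :
    (Sm a + Sm b + 1) ^ n =
      ∑ i ∈ range (n + 1), ∑ t ∈ range (i + 1),
        AddMonoidAlgebra.single (t • a + (i - t) • b)
          (((n.choose i) * (i.choose t) : ℕ) : ℚ) := by
  rw [add_pow]
  refine Finset.sum_congr rfl fun i hi => ?_
  rw [one_pow, mul_one, binom, Finset.sum_mul]
  refine Finset.sum_congr rfl fun t ht => ?_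
  rw [AddMonoidAlgebra.natCast_def, AddMonoidAlgebra.single_mul_single, add_zero]
  push_cast
  ring_nf

def P (i : Fin 3) : Fin 3 → ℤ := Pi.single i 1

def uvec : Fin 3 → ℤ := fun _ => -1

lemma cubicLG_eq : cubicLG = (Sm (P 0) + Sm (P 1) + 1) ^ 3 * Sm uvec + Sm (P 2) := by
  have h : LXinv 0 * LXinv 1 * LXinv 2 = Sm uvec := by
    simp only [LXinv, AddMonoidAlgebra.single_mul_single, Sm, mul_one]
    congr 1
    funext s
    fin_cases s <;> simp [uvec]
  rw [cubicLG, ← h]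
  simp only [LX, Sm, P]
  ring

lemma expand (k : ℕ) :
    cubicLG ^ (2 * k) =
      ∑ j ∈ range (2 * k + 1), ∑ i ∈ range (3 * j + 1), ∑ t ∈ range (i + 1),
        AddMonoidAlgebra.single
          ((t • P 0 + (i - t) • P 1) + (j • uvec + (2 * k - j) • P 2))
          ((((2 * k).choose j) * (((3 * j).choose i) * (i.choose t)) : ℕ) : ℚ) := by
  rw [cubicLG_eq, add_pow]
  refine Finset.sum_congr rfl fun j hj => ?_
  rw [mul_pow, ← pow_mul, Sm_pow, Sm_pow, mul_assoc ((Sm (P 0) + Sm (P 1) + 1) ^ (3 * j)) (Sm (j • uvec)), Sm_mul, mul_comm 3 j, trinom,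
    Finset.sum_mul, Finset.sum_mul]
  refine Finset.sum_congr rfl fun i hi => ?_
  rw [Finset.sum_mul, Finset.sum_mul]
  refine Finset.sum_congr rfl fun t ht => ?_
  rw [Sm, AddMonoidAlgebra.single_mul_single, AddMonoidAlgebra.natCast_def,
    AddMonoidAlgebra.single_mul_single, add_zero, mul_one]
  congr 1
  push_cast
  ring

/-- The constant term of `((x+y+1)^3/(xyz) + z)^(2k)` equals `(2k)!·(3k)!/(k!)^5`. -/
theorem constantTerm_cubicLG_even_pow (k : ℕ) :
    (cubicLG ^ (2 * k)).coeff 0 =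
      ((Nat.factorial (2 * k) : ℚ) * (Nat.factorial (3 * k) : ℚ)) /
        ((Nat.factorial k : ℚ)) ^ 5 := by
  have key : (cubicLG ^ (2 * k)).coeff 0 =
      ∑ j ∈ range (2 * k + 1), ∑ i ∈ range (3 * j + 1), ∑ t ∈ range (i + 1),
        (if ((t • P 0 + (i - t) • P 1) + (j • uvec + (2 * k - j) • P 2)) = 0 then
          ((((2 * k).choose j) * (((3 * j).choose i) * (i.choose t)) : ℕ) : ℚ) else 0) := by
    rw [expand]
    rw [AddMonoidAlgebra.coeff_sum, Finset.sum_apply']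
    refine Finset.sum_congr rfl fun j hj => ?_
    rw [AddMonoidAlgebra.coeff_sum, Finset.sum_apply']
    refine Finset.sum_congr rfl fun i hi => ?_
    rw [AddMonoidAlgebra.coeff_sum, Finset.sum_apply']
    refine Finset.sum_congr rfl fun t ht => ?_
    rw [AddMonoidAlgebra.coeff_single]
    exact Finsupp.single_apply
  rw [key]
  have hcomp : ∀ j i t : ℕ, ∀ s : Fin 3,
      ((t • P 0 + (i - t) • P 1) + (j • uvec + (2 * k - j) • P 2)) s =
        (t : ℤ) * (P 0 s) + ((i - t : ℕ) : ℤ) * (P 1 s) + ((-(j : ℤ)) + ((2 * k - j : ℕ) : ℤ) * (P 2 s)) := by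
    intro j i t s
    simp [uvec, mul_comm]
  rw [Finset.sum_eq_single_of_mem k (by simp; omega)]
  · rw [Finset.sum_eq_single_of_mem (2 * k) (by simp; omega)]
    · rw [Finset.sum_eq_single_of_mem k (by simp; omega)]
      · rw [if_pos]
        · have h1 : 2 * k - k = k := by omega
          have h2 : 3 * k - 2 * k = k := by omega
          have hk2 : k ≤ 2 * k := by omega
          have hk3 : 2 * k ≤ 3 * k := by omega
          rw [Nat.cast_mul, Nat.cast_mul, Nat.cast_choose ℚ hk2, Nat.cast_choose ℚ hk3, h1, h2]
          have f0 : (Nat.factorial k : ℚ) ≠ 0 := by positivity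
          have f2 : (Nat.factorial (2 * k) : ℚ) ≠ 0 := by positivity
          field_simp
        · funext s
          have := hcomp k (2 * k) k s
          rw [this]
          fin_cases s <;> simp [P, Pi.single_apply] <;> omega
      · intro t ht htk
        rw [if_neg]
        intro h
        have h0 := congrFun h 0
        rw [hcomp] at h0
        simp [P, Pi.single_apply] at h0
        omega
    · intro i hi hik
      refine Finset.sum_eq_zero fun t ht => ?_
      rw [if_neg]
      intro h
      have h0 := congrFun h 0
      have h1 := congrFun h 1
      rw [hcomp] at h0 h1
      simp [P, Pi.single_apply] at h0 h1
      have hti : t < i + 1 := Finset.mem_range.mp ht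
      omega
  · intro j hj hjk
    refine Finset.sum_eq_zero fun i hi => Finset.sum_eq_zero fun t ht => ?_
    rw [if_neg]
    intro h
    have h2 := congrFun h 2
    rw [hcomp] at h2
    simp [P, Pi.single_apply] at h2
    have hj2 : j ≤ 2 * k := by simp at hj; omega
    rw [Nat.cast_sub hj2] at h2
    push_cast at h2
    omega
end

section
/- For every odd natural number m, the constant term of the Laurent polynomial ((x+y+1)^3/(xyz) + z)^m in ℚ[x^{±1}, y^{±1}, z^{±1}] is zero. -/
/-- The monoid hom sending an exponent vector `g` to `(-1)^(g 2) • x^g`. -/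
noncomputable def sgnHom : Multiplicative (Fin 3 → ℤ) →* Laurent3 where
  toFun g := AddMonoidAlgebra.single (Multiplicative.toAdd g)
      ((-1 : ℚ) ^ (Multiplicative.toAdd g 2))
  map_one' := by
    simp [AddMonoidAlgebra.one_def]
  map_mul' g h := by
    simp [AddMonoidAlgebra.single_mul_single,
      zpow_add₀ (by norm_num : (-1 : ℚ) ≠ 0)]

/-- The algebra endomorphism negating the variable `z`. -/
noncomputable def negZ : Laurent3 →ₐ[ℚ] Laurent3 :=
  AddMonoidAlgebra.lift ℚ Laurent3 (Fin 3 → ℤ) sgnHom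

lemma negZ_single (g : Fin 3 → ℤ) (c : ℚ) :
    negZ (AddMonoidAlgebra.single g c)
      = AddMonoidAlgebra.single g (c * (-1 : ℚ) ^ (g 2)) := by
  rw [negZ, AddMonoidAlgebra.lift_single]
  show c • AddMonoidAlgebra.single g ((-1 : ℚ) ^ (g 2)) = _
  rw [AddMonoidAlgebra.smul_single']

lemma negZ_coeff_zero (p : Laurent3) : (negZ p).coeff 0 = p.coeff 0 := by
  induction p using AddMonoidAlgebra.induction_linear with
  | zero => simp
  | add p q hp hq => rw [map_add, AddMonoidAlgebra.coeff_add, AddMonoidAlgebra.coeff_add, Finsupp.add_apply, Finsupp.add_apply, hp, hq]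
  | single g c =>
    rw [negZ_single]
    classical
    by_cases h : g = 0
    · subst h; simp
    · simp [Finsupp.single_apply, h]

lemma negZ_cubicLG : negZ cubicLG = -cubicLG := by
  have h0 : negZ (LX 0) = LX 0 := by
    rw [LX, negZ_single]; rw [Pi.single_apply]; norm_num [show ¬((2:Fin 3)=0) from by decide, show ¬((2:Fin 3)=1) from by decide, show ((2:Fin 3)=2) from rfl]
  have h1 : negZ (LX 1) = LX 1 := by
    rw [LX, negZ_single]; rw [Pi.single_apply]; norm_num [show ¬((2:Fin 3)=0) from by decide, show ¬((2:Fin 3)=1) from by decide, show ((2:Fin 3)=2) from rfl]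
  have h2 : negZ (LX 2) = -LX 2 := by
    rw [LX, negZ_single]; rw [Pi.single_apply]; norm_num [show ¬((2:Fin 3)=0) from by decide, show ¬((2:Fin 3)=1) from by decide, show ((2:Fin 3)=2) from rfl]
  have h0' : negZ (LXinv 0) = LXinv 0 := by
    rw [LXinv, negZ_single]; rw [Pi.single_apply]; norm_num [show ¬((2:Fin 3)=0) from by decide, show ¬((2:Fin 3)=1) from by decide, show ((2:Fin 3)=2) from rfl]
  have h1' : negZ (LXinv 1) = LXinv 1 := by
    rw [LXinv, negZ_single]; rw [Pi.single_apply]; norm_num [show ¬((2:Fin 3)=0) from by decide, show ¬((2:Fin 3)=1) from by decide, show ((2:Fin 3)=2) from rfl]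
  have h2' : negZ (LXinv 2) = -LXinv 2 := by
    rw [LXinv, negZ_single]; rw [Pi.single_apply]; norm_num [show ¬((2:Fin 3)=0) from by decide, show ¬((2:Fin 3)=1) from by decide, show ((2:Fin 3)=2) from rfl]
  rw [cubicLG]
  rw [map_add, map_mul, map_mul, map_mul, map_pow, map_add, map_add, map_one,
    h0, h1, h2, h0', h1', h2']
  ring

/-- For odd `m`, the constant term of `((x+y+1)^3/(xyz) + z)^m` vanishes. -/
theorem constantTerm_cubicLG_odd_pow (m : ℕ) (hm : Odd m) :
    (cubicLG ^ m).coeff 0 = 0 := by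
  have h : negZ (cubicLG ^ m) = -(cubicLG ^ m) := by
    rw [map_pow, negZ_cubicLG, hm.neg_pow]
  have h2 := negZ_coeff_zero (cubicLG ^ m)
  rw [h] at h2
  rw [show (-(cubicLG ^ m)).coeff 0 = -((cubicLG ^ m).coeff 0) from Finsupp.neg_apply _ _] at h2
  linarith
end

section
/- The formal power series I(t) = Σ_{k≥0} ((2k)!(3k)!/(k!)^5) t^{2k} in ℚ[[t]] is annihilated by the differential operator D^3 − 12 t^2 (3D+2)(3D+4)(D+1), where D = t·d/dt acts on formal power series. -/
open PowerSeries

/-- The Euler derivation `D = t·d/dt` on `ℚ⟦t⟧`, acting by `D(t^n) = n·t^n`. -/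
noncomputable def eulerD (f : PowerSeries ℚ) : PowerSeries ℚ :=
  PowerSeries.mk fun n => (n : ℚ) * PowerSeries.coeff n f

/-- The power series `I(t) = Σ_{k≥0} ((2k)!(3k)!/(k!)^5) t^{2k}`. -/
noncomputable def cubicPeriod : PowerSeries ℚ :=
  PowerSeries.mk fun n =>
    if n % 2 = 0 then
      ((Nat.factorial (2 * (n / 2)) : ℚ) * (Nat.factorial (3 * (n / 2)) : ℚ)) /
        ((Nat.factorial (n / 2) : ℚ)) ^ 5
    else 0

lemma coeff_eulerD (f : PowerSeries ℚ) (n : ℕ) :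
    coeff n (eulerD f) = (n : ℚ) * coeff n f := coeff_mk _ _

lemma coeff_two_mul (f : PowerSeries ℚ) (n : ℕ) :
    coeff n ((2 : PowerSeries ℚ) * f) = 2 * coeff n f := by
  rw [show (2 : PowerSeries ℚ) = C 2 from by simp [map_ofNat], coeff_C_mul]

lemma coeff_three_mul (f : PowerSeries ℚ) (n : ℕ) :
    coeff n ((3 : PowerSeries ℚ) * f) = 3 * coeff n f := by
  rw [show (3 : PowerSeries ℚ) = C 3 from by simp [map_ofNat], coeff_C_mul]

lemma coeff_four_mul (f : PowerSeries ℚ) (n : ℕ) :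
    coeff n ((4 : PowerSeries ℚ) * f) = 4 * coeff n f := by
  rw [show (4 : PowerSeries ℚ) = C 4 from by simp [map_ofNat], coeff_C_mul]

lemma cubic_key (n : ℕ) :
    ((n : ℚ) + 2) ^ 3 * coeff (n + 2) cubicPeriod =
      12 * (3 * (n : ℚ) + 2) * (3 * n + 4) * (n + 1) * coeff n cubicPeriod := by
  rcases Nat.even_or_odd n with ⟨k, hk⟩ | hodd
  · subst hk
    have h1 : (k + k) % 2 = 0 := by omega
    have h2 : (k + k + 2) % 2 = 0 := by omega
    have h3 : (k + k) / 2 = k := by omega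
    have h4 : (k + k + 2) / 2 = k + 1 := by omega
    simp only [cubicPeriod, coeff_mk, h1, h2, h3, h4, if_true]
    have e2 : 2 * (k + 1) = (2 * k + 1) + 1 := by ring
    have e3 : 3 * (k + 1) = ((3 * k + 1) + 1) + 1 := by ring
    rw [e2, e3, Nat.factorial_succ, Nat.factorial_succ, Nat.factorial_succ,
      Nat.factorial_succ, show 2 * k + 1 = (2 * k) + 1 from rfl, Nat.factorial_succ,
      show 3 * k + 1 = (3 * k) + 1 from rfl, Nat.factorial_succ]
    have hr : ((k.factorial : ℚ)) ≠ 0 := Nat.cast_ne_zero.mpr k.factorial_ne_zero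
    have hr1 : (((k + 1).factorial : ℚ)) ≠ 0 := Nat.cast_ne_zero.mpr (k + 1).factorial_ne_zero
    field_simp
    push_cast
    ring
  · obtain ⟨k, hk⟩ := hodd
    subst hk
    have h1 : (2 * k + 1) % 2 = 1 := by omega
    have h2 : (2 * k + 1 + 2) % 2 = 1 := by omega
    simp only [cubicPeriod, coeff_mk, h1, h2]
    norm_num


/-- `I(t)` is annihilated by the Picard–Fuchs operator
`D^3 − 12 t^2 (3D+2)(3D+4)(D+1)` of the mirror of the cubic threefold. -/
theorem cubicPeriod_picardFuchs :
    eulerD (eulerD (eulerD cubicPeriod)) -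
      12 * (PowerSeries.X : PowerSeries ℚ) ^ 2 *
        (3 * eulerD (3 * eulerD (eulerD cubicPeriod + cubicPeriod) +
              4 * (eulerD cubicPeriod + cubicPeriod)) +
          2 * (3 * eulerD (eulerD cubicPeriod + cubicPeriod) +
              4 * (eulerD cubicPeriod + cubicPeriod))) = 0 := by
  set G : PowerSeries ℚ :=
    3 * eulerD (3 * eulerD (eulerD cubicPeriod + cubicPeriod) +
          4 * (eulerD cubicPeriod + cubicPeriod)) +
      2 * (3 * eulerD (eulerD cubicPeriod + cubicPeriod) +
          4 * (eulerD cubicPeriod + cubicPeriod)) with hG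
  have h12 : (12 : PowerSeries ℚ) * X ^ 2 * G = (C 12 * G) * X ^ 2 := by
    rw [show (C (12 : ℚ)) = 12 from by simp [map_ofNat]]; ring
  ext n
  rw [map_sub, map_zero, h12, coeff_mul_X_pow', sub_eq_zero]
  have hGc : ∀ m : ℕ, coeff m G =
      (3 * (m : ℚ) + 2) * ((3 * m + 4) * (((m : ℚ) + 1) * coeff m cubicPeriod)) := by
    intro m
    simp only [hG, map_add, coeff_two_mul, coeff_three_mul, coeff_four_mul, coeff_eulerD]
    ring
  rcases n with _ | _ | n
  · simp [coeff_eulerD]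
  · simp [coeff_eulerD, cubicPeriod, coeff_mk]
  · have hle : 2 ≤ n + 1 + 1 := by omega
    rw [if_pos hle, coeff_C_mul]
    simp only [coeff_eulerD, show n + 1 + 1 - 2 = n from rfl, hGc]
    have := cubic_key n
    push_cast
    push_cast at this
    linear_combination this
end

section
/- Let α be a nonzero complex number with α ≠ −1 and set a = α^4. Consider the rational function f_a(x,y,z) = (x+y)(y+z)(z+1)(x+a)/(x·y·z). Then f_a(α^3, α^2, α) = (α+1)^4, and the point (α^3, α^2, α) is a critical point of f_a, i.e. all three partial derivatives ∂f_a/∂x, ∂f_a/∂y, ∂f_a/∂z vanish at (α^3, α^2, α). -/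
/-- The deformed toric Landau–Ginzburg model `f_a = (x+y)(y+z)(z+1)(x+a)/(xyz)`
of the Fano threefold `X_{2-12}`. -/
noncomputable def fLG (a x y z : ℂ) : ℂ :=
  (x + y) * (y + z) * (z + 1) * (x + a) / (x * y * z)

/-- For `α ≠ 0, −1` and `a = α^4`, the point `(α³, α², α)` is a critical point of `f_a`
with critical value `(α+1)^4`. -/
theorem critical_point_X2_12 (α : ℂ) (hα : α ≠ 0) (hα1 : α ≠ -1) (a : ℂ) (ha : a = α ^ 4) :
    fLG a (α ^ 3) (α ^ 2) α = (α + 1) ^ 4 ∧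
    deriv (fun x => fLG a x (α ^ 2) α) (α ^ 3) = 0 ∧
    deriv (fun y => fLG a (α ^ 3) y α) (α ^ 2) = 0 ∧
    deriv (fun z => fLG a (α ^ 3) (α ^ 2) z) α = 0 := by
  subst ha
  have hpow : ∀ n : ℕ, (α : ℂ) ^ n ≠ 0 := fun n => pow_ne_zero n hα
  refine ⟨?_, ?_, ?_, ?_⟩
  · simp only [fLG]
    field_simp
    ring
  · have hn : HasDerivAt (fun x : ℂ => (x + α ^ 2) * (α ^ 2 + α) * (α + 1) * (x + α ^ 4))
        ((1 * (α ^ 2 + α) * (α + 1)) * (α ^ 3 + α ^ 4) +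
          ((α ^ 3 + α ^ 2) * (α ^ 2 + α) * (α + 1)) * 1) (α ^ 3) :=
      ((((hasDerivAt_id (α ^ 3)).add_const (α ^ 2)).mul_const (α ^ 2 + α)).mul_const
        (α + 1)).mul ((hasDerivAt_id (α ^ 3)).add_const (α ^ 4))
    have hd : HasDerivAt (fun x : ℂ => x * α ^ 2 * α) (1 * α ^ 2 * α) (α ^ 3) :=
      ((hasDerivAt_id (α ^ 3)).mul_const (α ^ 2)).mul_const α
    have h := hn.div hd (by simp [hα])
    have heq : (fun x : ℂ => fLG (α ^ 4) x (α ^ 2) α) =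
        fun x : ℂ => (x + α ^ 2) * (α ^ 2 + α) * (α + 1) * (x + α ^ 4) / (x * α ^ 2 * α) :=
      rfl
    rw [heq]; refine h.deriv.trans ?_
    rw [div_eq_zero_iff]
    left
    ring
  · have hn : HasDerivAt (fun y : ℂ => (α ^ 3 + y) * (y + α) * (α + 1) * (α ^ 3 + α ^ 4))
        (((1 * (α ^ 2 + α) + (α ^ 3 + α ^ 2) * 1) * (α + 1)) * (α ^ 3 + α ^ 4)) (α ^ 2) :=
      (((((hasDerivAt_id (α ^ 2)).const_add (α ^ 3)).mul
        ((hasDerivAt_id (α ^ 2)).add_const α)).mul_const (α + 1)).mul_const (α ^ 3 + α ^ 4))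
    have hd : HasDerivAt (fun y : ℂ => α ^ 3 * y * α) (α ^ 3 * 1 * α) (α ^ 2) :=
      (((hasDerivAt_id (α ^ 2)).const_mul (α ^ 3)).mul_const α)
    have h := hn.div hd (by simp [hα])
    have heq : (fun y : ℂ => fLG (α ^ 4) (α ^ 3) y α) =
        fun y : ℂ => (α ^ 3 + y) * (y + α) * (α + 1) * (α ^ 3 + α ^ 4) / (α ^ 3 * y * α) :=
      rfl
    rw [heq]; refine h.deriv.trans ?_
    rw [div_eq_zero_iff]
    left
    ring
  · have hn : HasDerivAt (fun z : ℂ => (α ^ 3 + α ^ 2) * (α ^ 2 + z) * (z + 1) * (α ^ 3 + α ^ 4))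
        ((((α ^ 3 + α ^ 2) * 1) * (α + 1) + ((α ^ 3 + α ^ 2) * (α ^ 2 + α)) * 1) *
          (α ^ 3 + α ^ 4)) α :=
      (((((hasDerivAt_id α).const_add (α ^ 2)).const_mul (α ^ 3 + α ^ 2)).mul
        ((hasDerivAt_id α).add_const 1)).mul_const (α ^ 3 + α ^ 4))
    have hd : HasDerivAt (fun z : ℂ => α ^ 3 * α ^ 2 * z) (α ^ 3 * α ^ 2 * 1) α :=
      (hasDerivAt_id α).const_mul (α ^ 3 * α ^ 2)
    have h := hn.div hd (by simp [hα])
    have heq : (fun z : ℂ => fLG (α ^ 4) (α ^ 3) (α ^ 2) z) =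
        fun z : ℂ => (α ^ 3 + α ^ 2) * (α ^ 2 + z) * (z + 1) * (α ^ 3 + α ^ 4) / (α ^ 3 * α ^ 2 * z) :=
      rfl
    rw [heq]; refine h.deriv.trans ?_
    rw [div_eq_zero_iff]
    left
    ring
end
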